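/- Let n ≥ 1, let R : ℝ → Matrix (Fin n) (Fin n) ℝ be continuous, let α ∈ ℝ, and let A, B : ℝ → Matrix (Fin n) (Fin n) ℝ be differentiable solutions of the matrix Riccati equation A'(t) + A(t)² + R(t) = 0 and B'(t) + B(t)² + R(t) = 0 for all t ∈ ℝ, with trace (A t) = −α and trace (B t) = α for all t ∈ ℝ. Then the function t ↦ det (B t − A t) is constant. -/
import Mathlib

open Matrix

attribute [local instance] Matrix.normedAddCommGroup Matrix.normedSpace

section aux

variable {n : ℕ}

set_option maxHeartbeats 1000000 in
/-- The determinant as a continuous multilinear map in the rows. -/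
noncomputable def detCML (n : ℕ) :
    ContinuousMultilinearMap ℝ (fun _ : Fin n => (Fin n → ℝ)) ℝ :=
  MultilinearMap.mkContinuous
    (Matrix.detRowAlternating : (Fin n → ℝ) [⋀^Fin n]→ₗ[ℝ] ℝ).toMultilinearMap
    ((n.factorial : ℝ)) (by
      intro m
      show ‖(Matrix.of m).det‖ ≤ (n.factorial : ℝ) * ∏ i, ‖m i‖
      rw [Matrix.det_apply]
      refine (norm_sum_le _ _).trans ?_
      have h1 : ∀ σ : Equiv.Perm (Fin n),
          ‖(Equiv.Perm.sign σ : ℤ) • ∏ i, Matrix.of m (σ i) i‖ ≤ ∏ i, ‖m i‖ := by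
        intro σ
        rw [zsmul_eq_mul]
        rw [norm_mul]
        have : ‖((Equiv.Perm.sign σ : ℤ) : ℝ)‖ = 1 := by
          rcases Int.units_eq_one_or (Equiv.Perm.sign σ) with h | h <;> simp [h]
        rw [this, one_mul]
        calc ‖∏ i, Matrix.of m (σ i) i‖ = ∏ i, ‖Matrix.of m (σ i) i‖ := by
              simp [Real.norm_eq_abs, Finset.abs_prod]
          _ ≤ ∏ i, ‖m (σ i)‖ := by
              refine Finset.prod_le_prod (fun _ _ => norm_nonneg _) (fun i _ => ?_)
              exact norm_le_pi_norm (m (σ i)) i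
          _ = ∏ i, ‖m i‖ := Equiv.prod_comp σ (fun i => ‖m i‖)
      calc ∑ σ : Equiv.Perm (Fin n), ‖(Equiv.Perm.sign σ : ℤ) • ∏ i, Matrix.of m (σ i) i‖
          ≤ ∑ _σ : Equiv.Perm (Fin n), ∏ i, ‖m i‖ := Finset.sum_le_sum fun σ _ => h1 σ
        _ = (n.factorial : ℝ) * ∏ i, ‖m i‖ := by
            rw [Finset.sum_const, Finset.card_univ, Fintype.card_perm, nsmul_eq_mul]
            simp)

theorem detCML_apply (M : Matrix (Fin n) (Fin n) ℝ) :
    detCML n (fun i => M i) = M.det := rfl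

/-- Sum of determinants with one row replaced equals a trace. -/
theorem sum_det_updateRow (X M : Matrix (Fin n) (Fin n) ℝ) :
    ∑ i, (X.updateRow i (M i)).det = (M * adjugate X).trace := by
  have h : ∀ i, (X.updateRow i (M i)).det = (cramer Xᵀ) (M i) i := fun i =>
    (Matrix.cramer_transpose_apply X (M i) i).symm
  simp_rw [h, Matrix.cramer_eq_adjugate_mulVec, Matrix.trace]
  congr 1
  ext i
  rw [Matrix.mulVec, Matrix.diag_apply, Matrix.mul_apply]
  simp_rw [dotProduct, ← Matrix.adjugate_transpose]
  exact Finset.sum_congr rfl fun j _ => by rw [Matrix.transpose_apply, mul_comm]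

/-- Jacobi's formula as a `HasDerivAt`. -/
theorem hasDerivAt_det {W W' : ℝ → Matrix (Fin n) (Fin n) ℝ} {t : ℝ}
    (h : HasDerivAt W (W' t) t) :
    HasDerivAt (fun s => (W s).det) ((W' t * adjugate (W t)).trace) t := by
  have hrows : HasDerivAt (fun s => (fun i => W s i)) (fun i => W' t i) t := h
  have hd := ((detCML n).hasFDerivAt (x := fun i => W t i)).comp_hasDerivAt t hrows
  have : (detCML n).linearDeriv (fun i => W t i) (fun i => W' t i)
      = (W' t * adjugate (W t)).trace := by
    rw [ContinuousMultilinearMap.linearDeriv_apply, ← sum_det_updateRow (W t) (W' t)]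
    exact Finset.sum_congr rfl fun i _ => rfl
  rw [this] at hd
  exact hd
end aux

/-- If `A` and `B` are differentiable solutions of the matrix Riccati equation
`W' + W² + R = 0` with `R` continuous, `trace A ≡ −α` and `trace B ≡ α`, then
`t ↦ det (B t − A t)` is constant. -/
theorem det_riccati_difference_const (n : ℕ) (hn : 1 ≤ n) (α : ℝ)
    (R A B A' B' : ℝ → Matrix (Fin n) (Fin n) ℝ)
    (hR : Continuous R)
    (hA : ∀ t : ℝ, HasDerivAt A (A' t) t)
    (hB : ∀ t : ℝ, HasDerivAt B (B' t) t)
    (hAric : ∀ t : ℝ, A' t + (A t) ^ 2 + R t = 0)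
    (hBric : ∀ t : ℝ, B' t + (B t) ^ 2 + R t = 0)
    (htrA : ∀ t : ℝ, (A t).trace = -α)
    (htrB : ∀ t : ℝ, (B t).trace = α) :
    ∀ t₁ t₂ : ℝ, (B t₁ - A t₁).det = (B t₂ - A t₂).det := by
  set W : ℝ → Matrix (Fin n) (Fin n) ℝ := fun t => B t - A t with hW
  set W' : ℝ → Matrix (Fin n) (Fin n) ℝ := fun t => B' t - A' t with hW'
  have hWd : ∀ t, HasDerivAt W (W' t) t := fun t => (hB t).sub (hA t)
  have key : ∀ t, HasDerivAt (fun s => (W s).det) 0 t := by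
    intro t
    have hd := hasDerivAt_det (hWd t)
    have hW'eq : W' t = -(B t * W t + W t * A t) := by
      have h1 : A' t = -((A t) ^ 2) - R t := by
        have := hAric t; linear_combination (norm := module) this
      have h2 : B' t = -((B t) ^ 2) - R t := by
        have := hBric t; linear_combination (norm := module) this
      simp only [hW', h1, h2, hW]
      noncomm_ring
    have htr : (W' t * adjugate (W t)).trace = 0 := by
      rw [hW'eq]
      rw [neg_mul, add_mul, trace_neg, trace_add]
      rw [Matrix.mul_assoc (B t), Matrix.mul_adjugate, Matrix.mul_assoc (W t)]
      rw [Matrix.trace_mul_comm (W t) (A t * adjugate (W t))]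
      rw [Matrix.mul_assoc (A t), Matrix.adjugate_mul]
      have e1 : (B t * ((W t).det • (1 : Matrix (Fin n) (Fin n) ℝ))).trace
          = (W t).det * (B t).trace := by
        rw [Matrix.mul_smul, Matrix.mul_one, Matrix.trace_smul, smul_eq_mul]
      have e2 : (A t * ((W t).det • (1 : Matrix (Fin n) (Fin n) ℝ))).trace
          = (W t).det * (A t).trace := by
        rw [Matrix.mul_smul, Matrix.mul_one, Matrix.trace_smul, smul_eq_mul]
      rw [e1, e2, htrA t, htrB t]
      ring
    rwa [htr] at hd
  intro t₁ t₂
  have hconst : ∀ t, (W t).det = (W 0).det := by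
    intro t
    have := is_const_of_deriv_eq_zero (f := fun s => (W s).det)
      (fun s => (key s).differentiableAt) (fun s => (key s).deriv) t 0
    exact this
  rw [show (B t₁ - A t₁) = W t₁ from rfl, show (B t₂ - A t₂) = W t₂ from rfl,
    hconst t₁, hconst t₂]
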